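/- Let p ≥ 1 be an integer, let n, n' : ℕ → ℕ be finitely supported occupation-number sequences with n' admissible, and let α ≤ β be nonnegative integers such that: n_j = n'_j for all j with pα ≤ j < pβ; Σ_{j<pα} n_j = Σ_{j<pα} n'_j; and Σ_{j<pα} j·n_j ≥ Σ_{j<pα} j·n'_j. Then for every integer k with α ≤ k ≤ β: if pk is a renewal point of n, then pk is also a renewal point of n'. -/

import Mathlib

/-- `pk` is a renewal point of the occupation-number sequence `n`:
`Σ_{j<pk} n_j = k` and `Σ_{j<pk} j·n_j = p·k(k-1)/2`. -/
def IsRenewalPt (p : ℕ) (n : ℕ → ℕ) (k : ℕ) : Prop :=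
  (∑ j ∈ Finset.range (p * k), n j) = k ∧
    2 * ∑ j ∈ Finset.range (p * k), j * n j = p * k * (k - 1)

/-- The occupation-number sequence `n` is admissible: whenever
`Σ_{j<pk} n_j = k`, also `Σ_{j<pk} j·n_j ≥ p·k(k-1)/2`. -/
def AdmissibleOcc (p : ℕ) (n : ℕ → ℕ) : Prop :=
  ∀ k : ℕ, 1 ≤ k → (∑ j ∈ Finset.range (p * k), n j) = k →
    p * k * (k - 1) ≤ 2 * ∑ j ∈ Finset.range (p * k), j * n j

/-- If `n` and `n'` coincide on `{pα, …, pβ-1}`, have the same number of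
particles to the left of `pα`, with the first moment of `n` dominating that of
`n'` there, and `n'` is admissible, then every renewal point `pk` of `n` with
`α ≤ k ≤ β` is a renewal point of `n'` as well. -/
theorem renewal_point_transfer (p : ℕ) (hp : 1 ≤ p) (n n' : ℕ → ℕ)
    (hfin : (Function.support n).Finite) (hfin' : (Function.support n').Finite)
    (hadm' : AdmissibleOcc p n') (α β : ℕ) (hαβ : α ≤ β)
    (heq : ∀ j, p * α ≤ j → j < p * β → n j = n' j)
    (hnum : ∑ j ∈ Finset.range (p * α), n j = ∑ j ∈ Finset.range (p * α), n' j)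
    (hmom : ∑ j ∈ Finset.range (p * α), j * n' j ≤
      ∑ j ∈ Finset.range (p * α), j * n j)
    (k : ℕ) (hk1 : α ≤ k) (hk2 : k ≤ β) (hren : IsRenewalPt p n k) :
    IsRenewalPt p n' k := by
  obtain ⟨h1, h2⟩ := hren
  have hpk : p * α ≤ p * k := Nat.mul_le_mul_left p hk1
  have hsplit : ∀ f : ℕ → ℕ, ∑ j ∈ Finset.range (p*k), f j =
      ∑ j ∈ Finset.range (p*α), f j + ∑ j ∈ Finset.Ico (p*α) (p*k), f j := by
    intro f
    rw [Finset.range_eq_Ico,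
      ← Finset.sum_Ico_consecutive _ (Nat.zero_le _) hpk, Finset.range_eq_Ico]
  have hmid : ∀ j ∈ Finset.Ico (p*α) (p*k), n j = n' j := by
    intro j hj
    rw [Finset.mem_Ico] at hj
    exact heq j hj.1 (lt_of_lt_of_le hj.2 (Nat.mul_le_mul_left p hk2))
  have hcount : ∑ j ∈ Finset.range (p*k), n' j = k := by
    rw [hsplit, ← hnum, ← Finset.sum_congr rfl hmid, ← hsplit, h1]
  refine ⟨hcount, ?_⟩
  rcases Nat.eq_zero_or_pos k with hk0 | hk0
  · subst hk0; simp
  have hle : ∑ j ∈ Finset.range (p*k), j * n' j ≤ ∑ j ∈ Finset.range (p*k), j * n j := by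
    rw [hsplit (fun j => j * n' j), hsplit (fun j => j * n j)]
    have heqmid : ∑ j ∈ Finset.Ico (p*α) (p*k), j * n' j =
        ∑ j ∈ Finset.Ico (p*α) (p*k), j * n j := by
      exact Finset.sum_congr rfl fun j hj => by rw [hmid j hj]
    omega
  have hge := hadm' k hk0 hcount
  omega
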